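/- Let X and X' be i.i.d. random vectors in ℝⁿ and let U be an orthogonal map on ℝⁿ. Then for every t ≥ 0, P(|X| ≤ t)² ≤ 2 · max( P(|(X + U X')/√2| ≤ t), P(|(X − U X')/√2| ≤ t) ). -/

import Mathlib

open MeasureTheory Real

/-- For i.i.d. random vectors `X, X'` in `ℝⁿ`, an orthogonal map `U` and `t ≥ 0`:
`P(|X| ≤ t)² ≤ 2 max(P(|(X+UX')/√2| ≤ t), P(|(X−UX')/√2| ≤ t))`. -/
theorem deviation_transfer_below
    {n : ℕ} {Ω : Type*} [MeasurableSpace Ω] (ℙ : Measure Ω) [IsProbabilityMeasure ℙ]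
    (X X' : Ω → EuclideanSpace ℝ (Fin n)) (hX : Measurable X) (hX' : Measurable X')
    (hindep : ProbabilityTheory.IndepFun X X' ℙ)
    (hid : Measure.map X ℙ = Measure.map X' ℙ)
    (U : EuclideanSpace ℝ (Fin n) ≃ₗᵢ[ℝ] EuclideanSpace ℝ (Fin n))
    (t : ℝ) (ht : 0 ≤ t) :
    (ℙ {ω | ‖X ω‖ ≤ t}).toReal ^ 2 ≤
      2 * max (ℙ {ω | ‖(Real.sqrt 2)⁻¹ • (X ω + U (X' ω))‖ ≤ t}).toReal
              (ℙ {ω | ‖(Real.sqrt 2)⁻¹ • (X ω - U (X' ω))‖ ≤ t}).toReal := by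
  set s : Set (EuclideanSpace ℝ (Fin n)) := {x | ‖x‖ ≤ t} with hs
  have hsm : MeasurableSet s := measurableSet_le (by fun_prop) measurable_const
  -- equality of distributions on the ball
  have hAB : ℙ (X ⁻¹' s) = ℙ (X' ⁻¹' s) := by
    rw [← Measure.map_apply hX hsm, ← Measure.map_apply hX' hsm, hid]
  have hmul : ℙ (X ⁻¹' s ∩ X' ⁻¹' s) = ℙ (X ⁻¹' s) * ℙ (X' ⁻¹' s) :=
    hindep.measure_inter_preimage_eq_mul s s hsm hsm
  -- inclusion into the union
  set Sp : Set Ω := {ω | ‖(Real.sqrt 2)⁻¹ • (X ω + U (X' ω))‖ ≤ t}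
  set Sm : Set Ω := {ω | ‖(Real.sqrt 2)⁻¹ • (X ω - U (X' ω))‖ ≤ t}
  have hsqrt2 : (0:ℝ) < Real.sqrt 2 := Real.sqrt_pos.2 (by norm_num)
  have hsub : X ⁻¹' s ∩ X' ⁻¹' s ⊆ Sp ∪ Sm := by
    intro ω hω
    obtain ⟨ha, hb⟩ := hω
    have ha : ‖X ω‖ ≤ t := ha
    have hb' : ‖U (X' ω)‖ ≤ t := by rw [U.norm_map]; exact hb
    set a := X ω; set b := U (X' ω)
    have hpar : ‖a + b‖ * ‖a + b‖ + ‖a - b‖ * ‖a - b‖ = 2 * (‖a‖ * ‖a‖ + ‖b‖ * ‖b‖) :=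
      by have h := parallelogram_law_with_norm ℝ a b; simp only [sq] at h; exact h
    have hbound : ‖a‖ * ‖a‖ + ‖b‖ * ‖b‖ ≤ 2 * (t * t) := by nlinarith [norm_nonneg a, norm_nonneg b]
    have hmin : ‖a + b‖ * ‖a + b‖ ≤ 2 * (t * t) ∨ ‖a - b‖ * ‖a - b‖ ≤ 2 * (t * t) := by
      by_contra h
      push_neg at h
      nlinarith [h.1, h.2]
    have key : ∀ c : EuclideanSpace ℝ (Fin n), ‖c‖ * ‖c‖ ≤ 2 * (t * t) →
        ‖(Real.sqrt 2)⁻¹ • c‖ ≤ t := by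
      intro c hc
      rw [norm_smul, norm_inv, Real.norm_eq_abs, abs_of_pos hsqrt2]
      rw [inv_mul_le_iff₀ hsqrt2]
      have h2 : Real.sqrt 2 * Real.sqrt 2 = 2 := Real.mul_self_sqrt (by norm_num)
      nlinarith [norm_nonneg c, Real.sqrt_nonneg 2, mul_nonneg ht (Real.sqrt_nonneg 2)]
    rcases hmin with h | h
    · exact Or.inl (key _ h)
    · exact Or.inr (key _ h)
  -- measure computations
  have hXs : {ω | ‖X ω‖ ≤ t} = X ⁻¹' s := rfl
  have hfin : ∀ A : Set Ω, ℙ A ≠ ⊤ := fun A => (measure_lt_top ℙ A).ne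
  have hmeas_le : ℙ (X ⁻¹' s) * ℙ (X' ⁻¹' s) ≤ ℙ Sp + ℙ Sm := by
    rw [← hmul]
    exact le_trans (measure_mono hsub) (measure_union_le _ _)
  have htoReal : (ℙ (X ⁻¹' s)).toReal ^ 2 ≤ (ℙ Sp).toReal + (ℙ Sm).toReal := by
    have h1 : ((ℙ (X ⁻¹' s)) * (ℙ (X' ⁻¹' s))).toReal ≤ (ℙ Sp + ℙ Sm).toReal :=
      ENNReal.toReal_mono (by simp [hfin]) hmeas_le
    rw [ENNReal.toReal_mul, ENNReal.toReal_add (hfin _) (hfin _)] at h1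
    rw [← hAB] at h1
    nlinarith [h1]
  calc (ℙ {ω | ‖X ω‖ ≤ t}).toReal ^ 2 = (ℙ (X ⁻¹' s)).toReal ^ 2 := by rw [hXs]
    _ ≤ (ℙ Sp).toReal + (ℙ Sm).toReal := htoReal
    _ ≤ 2 * max (ℙ Sp).toReal (ℙ Sm).toReal := by
        have := le_max_left (ℙ Sp).toReal (ℙ Sm).toReal
        have := le_max_right (ℙ Sp).toReal (ℙ Sm).toReal
        linarith
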